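/- In the setting of the previous statement, if H̄ > 0 (strain-hardening), then the consistent elastoplastic tangent modulus ℂᵉᵖ(e) = ℂ(e) − (N : ℂ(e)) ℂ(N)/(N : ℂ(N) + H̄) is positive definite on symmetric matrices: e : ℂᵉᵖ(e) > 0 for all e ≠ 0. -/

import Mathlib

noncomputable def fip {d : ℕ} (A B : Matrix (Fin d) (Fin d) ℝ) : ℝ :=
  ∑ i, ∑ j, A i j * B i j

noncomputable def Cep {d : ℕ}
    (C : Matrix (Fin d) (Fin d) ℝ →ₗ[ℝ] Matrix (Fin d) (Fin d) ℝ)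
    (N : Matrix (Fin d) (Fin d) ℝ) (Hbar : ℝ)
    (e : Matrix (Fin d) (Fin d) ℝ) : Matrix (Fin d) (Fin d) ℝ :=
  C e - (fip N (C e) / (fip N (C N) + Hbar)) • C N

lemma fip_comm {d : ℕ} (A B : Matrix (Fin d) (Fin d) ℝ) : fip A B = fip B A := by
  simp [fip, mul_comm]

lemma fip_sub_left {d : ℕ} (A B M : Matrix (Fin d) (Fin d) ℝ) :
    fip (A - B) M = fip A M - fip B M := by
  simp [fip, sub_mul, Finset.sum_sub_distrib]

lemma fip_sub_right {d : ℕ} (A B M : Matrix (Fin d) (Fin d) ℝ) :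
    fip M (A - B) = fip M A - fip M B := by
  simp [fip, mul_sub, Finset.sum_sub_distrib]

lemma fip_smul_left {d : ℕ} (c : ℝ) (A M : Matrix (Fin d) (Fin d) ℝ) :
    fip (c • A) M = c * fip A M := by
  simp [fip, Finset.mul_sum, mul_assoc]

lemma fip_smul_right {d : ℕ} (c : ℝ) (A M : Matrix (Fin d) (Fin d) ℝ) :
    fip M (c • A) = c * fip M A := by
  rw [fip_comm, fip_smul_left, fip_comm]

/-- for strain-hardening (H̄ > 0), the consistent elastoplastic
tangent modulus is positive definite on symmetric matrices. -/
theorem stmt_8 (d : ℕ)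
    (C : Matrix (Fin d) (Fin d) ℝ →ₗ[ℝ] Matrix (Fin d) (Fin d) ℝ)
    (hCsymm : ∀ a b, fip (C a) b = fip a (C b))
    (hCpos : ∀ e : Matrix (Fin d) (Fin d) ℝ, e.IsSymm → e ≠ 0 → 0 < fip e (C e))
    (N : Matrix (Fin d) (Fin d) ℝ) (hN : N.IsSymm) (hN0 : N ≠ 0)
    (Hbar : ℝ) (hH : 0 < Hbar) :
    ∀ e : Matrix (Fin d) (Fin d) ℝ, e.IsSymm → e ≠ 0 →
      0 < fip e (Cep C N Hbar e) := by
  intro e he he0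
  set a := fip N (C N) with ha_def
  set b := fip N (C e) with hb_def
  set c := fip e (C e) with hc_def
  have ha : 0 < a := hCpos N hN hN0
  have hc : 0 < c := hCpos e he he0
  have hbe : fip e (C N) = b := by
    rw [fip_comm, hCsymm]
  -- Cauchy-Schwarz: b^2 ≤ a * c
  have hCS : b ^ 2 ≤ a * c := by
    set t := b / a with ht
    set x := e - t • N with hx
    have hxs : x.IsSymm := he.sub (hN.smul t)
    have hxnn : 0 ≤ fip x (C x) := by
      rcases eq_or_ne x 0 with h | h
      · simp [h, fip]
      · exact (hCpos x hxs h).le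
    have hexp : fip x (C x) = c - 2 * t * b + t ^ 2 * a := by
      rw [hx, map_sub, map_smul, fip_sub_left, fip_sub_right, fip_sub_right,
        fip_smul_left, fip_smul_right, fip_smul_left, fip_smul_right, hbe]
      rw [← ha_def, ← hb_def, ← hc_def]
      ring_nf
    rw [hexp, ht] at hxnn
    have h2 : c - 2 * (b / a) * b + (b / a) ^ 2 * a = c - b ^ 2 / a := by
      field_simp; ring
    rw [h2] at hxnn
    have := (div_le_iff₀ ha).mp (by linarith : b ^ 2 / a ≤ c)
    linarith
  have hD : 0 < a + Hbar := by linarith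
  have hval : fip e (Cep C N Hbar e) = c - b / (a + Hbar) * b := by
    rw [Cep, fip_sub_right, fip_smul_right, hbe]
  rw [hval]
  have hlt : b * b < (a + Hbar) * c := by nlinarith
  rw [div_mul_eq_mul_div, sub_pos, div_lt_iff₀ hD]
  linarith [hlt]
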